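/- The limit measure of Theorem 2 is a probability measure: with Δ = (c₁s − s₁c)²/(1 + |s|) and w(x) = [|s|/(π(1 − x²)√(c² − x²))] · [1 − (|α|² − |β|² + (α·conj(β) + conj(α)·β)s/c)·x] · (a₂x⁴ + a₁x² + a₀)/(c²(1 − x²)) on (−|c|, |c|), where a₀ = c², a₁ = 2s₁c(c₁s − s₁c) − c₁², a₂ = (c₁s − s₁c)², one has w(x) ≥ 0 on (−|c|, |c|) and Δ + ∫_{−|c|}^{|c|} w(x) dx = 1, for every α, β ∈ ℂ with |α|² + |β|² = 1. -/

import Mathlib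

open Filter

/-- The density part `w` of the limit law of `X_t/t` (Theorem 2), extended by `0`
outside `(-|c|, |c|)`. -/
noncomputable def wdens (c s c₁ s₁ : ℝ) (α β : ℂ) (x : ℝ) : ℝ :=
  if |x| < |c| then
    |s| / (Real.pi * (1 - x ^ 2) * Real.sqrt (c ^ 2 - x ^ 2))
      * (1 - (Complex.normSq α - Complex.normSq β
            + (α * (starRingEnd ℂ) β + (starRingEnd ℂ) α * β).re * s / c) * x)
      * (((c₁ * s - s₁ * c) ^ 2 * x ^ 4 + (2 * s₁ * c * (c₁ * s - s₁ * c) - c₁ ^ 2) * x ^ 2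
            + c ^ 2) / (c ^ 2 * (1 - x ^ 2)))
  else 0

section Aux

lemma sin_ne (θ : ℝ) (h0 : 0 ≤ θ) (h2 : θ < 2 * Real.pi) (hθ0 : θ ≠ 0) (hθpi : θ ≠ Real.pi) :
    Real.sin θ ≠ 0 := by
  intro h
  obtain ⟨n, hn⟩ := Real.sin_eq_zero_iff.1 h
  have hπ := Real.pi_pos
  have hn0 : (0:ℤ) ≤ n := by
    by_contra hlt
    push_neg at hlt
    have hle : n ≤ -1 := by omega
    have : (n:ℝ) ≤ -1 := by exact_mod_cast hle
    nlinarith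
  have hn2 : (n:ℤ) < 2 := by
    by_contra hge
    push_neg at hge
    have : (2:ℝ) ≤ (n:ℝ) := by exact_mod_cast hge
    nlinarith
  interval_cases n
  · simp at hn; exact hθ0 hn.symm
  · push_cast at hn; exact hθpi (by linarith)

lemma cos_ne (θ : ℝ) (h0 : 0 ≤ θ) (h2 : θ < 2 * Real.pi) (hh : θ ≠ Real.pi / 2)
    (h3 : θ ≠ 3 * Real.pi / 2) : Real.cos θ ≠ 0 := by
  intro h
  obtain ⟨n, hn⟩ := Real.cos_eq_zero_iff.1 h
  have hπ := Real.pi_pos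
  have hn0 : (0:ℤ) ≤ n := by
    by_contra hlt
    push_neg at hlt
    have hle : n ≤ -1 := by omega
    have : (n:ℝ) ≤ -1 := by exact_mod_cast hle
    nlinarith
  have hn2 : (n:ℤ) < 2 := by
    by_contra hge
    push_neg at hge
    have : (2:ℝ) ≤ (n:ℝ) := by exact_mod_cast hge
    nlinarith
  interval_cases n
  · push_cast at hn; exact hh (by linarith)
  · push_cast at hn; exact h3 (by linarith)


lemma deriv_arcsin_div (c : ℝ) (hc0 : c ≠ 0) (x : ℝ) (hx : |x| < |c|) :
    HasDerivAt (fun y => Real.arcsin (y / |c|)) (1 / Real.sqrt (c ^ 2 - x ^ 2)) x := by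
  have hca : 0 < |c| := abs_pos.2 hc0
  have hx2 : x ^ 2 < c ^ 2 := by nlinarith [sq_abs x, sq_abs c, abs_nonneg x]
  have hlt : abs (x / |c|) < 1 := by
    rw [abs_div, abs_abs]; exact (div_lt_one hca).2 hx
  have h1 : x / |c| ≠ -1 := by intro h; rw [h] at hlt; norm_num at hlt
  have h2 : x / |c| ≠ 1 := by intro h; rw [h] at hlt; norm_num at hlt
  have hin : HasDerivAt (fun y : ℝ => y / |c|) (1 / |c|) x := by
    simpa using (hasDerivAt_id x).div_const |c|
  have h := (Real.hasDerivAt_arcsin h1 h2).comp x hin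
  refine h.congr_deriv (Eq.symm ?_)
  have hct : (0:ℝ) < c ^ 2 - x ^ 2 := by linarith
  have : 1 - (x / |c|) ^ 2 = (c ^ 2 - x ^ 2) / c ^ 2 := by
    field_simp [sq_abs]
    rw [sq_abs]; ring
  rw [this, Real.sqrt_div hct.le, Real.sqrt_sq_eq_abs]
  field_simp

lemma deriv_sqrt_sub (c : ℝ) (x : ℝ) (hx2 : x ^ 2 < c ^ 2) :
    HasDerivAt (fun y => Real.sqrt (c ^ 2 - y ^ 2)) (-x / Real.sqrt (c ^ 2 - x ^ 2)) x := by
  have hct : (0:ℝ) < c ^ 2 - x ^ 2 := by linarith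
  have hinner : HasDerivAt (fun y : ℝ => c ^ 2 - y ^ 2) (-(2 * x)) x := by
    simpa using (hasDerivAt_pow 2 x).const_sub (c ^ 2)
  have h := (Real.hasDerivAt_sqrt (ne_of_gt hct)).comp x hinner
  refine h.congr_deriv (Eq.symm ?_)
  have hs : Real.sqrt (c ^ 2 - x ^ 2) ≠ 0 := by positivity
  field_simp

lemma deriv_arctan_sqrt (c s : ℝ) (hs0 : s ≠ 0) (hcs : c ^ 2 + s ^ 2 = 1) (x : ℝ)
    (hx2 : x ^ 2 < c ^ 2) :
    HasDerivAt (fun y => Real.arctan (Real.sqrt (c ^ 2 - y ^ 2) / |s|))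
      (-(|s| * x) / ((1 - x ^ 2) * Real.sqrt (c ^ 2 - x ^ 2))) x := by
  have hct : (0:ℝ) < c ^ 2 - x ^ 2 := by linarith
  have hsa : 0 < |s| := abs_pos.2 hs0
  have hin : HasDerivAt (fun y => Real.sqrt (c ^ 2 - y ^ 2) / |s|)
      ((-x / Real.sqrt (c ^ 2 - x ^ 2)) / |s|) x := (deriv_sqrt_sub c x hx2).div_const _
  have h := (Real.hasDerivAt_arctan (Real.sqrt (c ^ 2 - x ^ 2) / |s|)).comp x hin
  refine h.congr_deriv (Eq.symm ?_)
  have hts : Real.sqrt (c ^ 2 - x ^ 2) ^ 2 = c ^ 2 - x ^ 2 := Real.sq_sqrt hct.le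
  have ht0 : Real.sqrt (c ^ 2 - x ^ 2) ≠ 0 := by positivity
  have h1x : (0:ℝ) < 1 - x ^ 2 := by nlinarith [sq_nonneg s, sq_abs s]
  have hst : (1:ℝ) - x ^ 2 = s ^ 2 + Real.sqrt (c ^ 2 - x ^ 2) ^ 2 := by rw [hts]; linarith
  rw [hst]
  field_simp [sq_abs]
  linear_combination (-x) * (sq_abs s)

lemma deriv_arcsin_comp (c s : ℝ) (hc0 : c ≠ 0) (hs0 : s ≠ 0) (hcs : c ^ 2 + s ^ 2 = 1)
    (x : ℝ) (hx : |x| < |c|) :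
    HasDerivAt (fun y => Real.arcsin (|s| * y / (|c| * Real.sqrt (1 - y ^ 2))))
      (|s| / ((1 - x ^ 2) * Real.sqrt (c ^ 2 - x ^ 2))) x := by
  have hca : 0 < |c| := abs_pos.2 hc0
  have hsa : 0 < |s| := abs_pos.2 hs0
  have hx2 : x ^ 2 < c ^ 2 := by nlinarith [sq_abs x, sq_abs c, abs_nonneg x]
  have hc1 : c ^ 2 < 1 := by nlinarith [sq_abs s, abs_pos.2 hs0]
  have h1x : (0:ℝ) < 1 - x ^ 2 := by linarith
  have hct : (0:ℝ) < c ^ 2 - x ^ 2 := by linarith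
  have hu2 : Real.sqrt (1 - x ^ 2) ^ 2 = 1 - x ^ 2 := Real.sq_sqrt h1x.le
  have hupos : 0 < Real.sqrt (1 - x ^ 2) := Real.sqrt_pos.2 h1x
  have ht2 : Real.sqrt (c ^ 2 - x ^ 2) ^ 2 = c ^ 2 - x ^ 2 := Real.sq_sqrt hct.le
  have htpos : 0 < Real.sqrt (c ^ 2 - x ^ 2) := Real.sqrt_pos.2 hct
  -- derivative of the inner function
  have hu : HasDerivAt (fun y => Real.sqrt (1 - y ^ 2)) (-x / Real.sqrt (1 - x ^ 2)) x := by
    have hinner : HasDerivAt (fun y : ℝ => 1 - y ^ 2) (-(2 * x)) x := by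
      simpa using (hasDerivAt_pow 2 x).const_sub 1
    have h := (Real.hasDerivAt_sqrt (ne_of_gt h1x)).comp x hinner
    refine h.congr_deriv (Eq.symm ?_)
    field_simp
  have hden : HasDerivAt (fun y => |c| * Real.sqrt (1 - y ^ 2))
      (|c| * (-x / Real.sqrt (1 - x ^ 2))) x := hu.const_mul |c|
  have hnum : HasDerivAt (fun y : ℝ => |s| * y) |s| x := by
    simpa using (hasDerivAt_id x).const_mul |s|
  have hdenne : |c| * Real.sqrt (1 - x ^ 2) ≠ 0 := by positivity
  have hr : HasDerivAt (fun y => |s| * y / (|c| * Real.sqrt (1 - y ^ 2)))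
      ((|s| * (|c| * Real.sqrt (1 - x ^ 2)) - |s| * x * (|c| * (-x / Real.sqrt (1 - x ^ 2))))
        / (|c| * Real.sqrt (1 - x ^ 2)) ^ 2) x := hnum.div hden hdenne
  -- the value of the inner function has absolute value < 1
  have hrsq : (|s| * x / (|c| * Real.sqrt (1 - x ^ 2))) ^ 2 < 1 := by
    rw [div_pow, div_lt_one (by positivity)]
    rw [mul_pow, mul_pow, hu2, sq_abs, sq_abs]
    nlinarith
  have hne1 : |s| * x / (|c| * Real.sqrt (1 - x ^ 2)) ≠ -1 := by
    intro h; rw [h] at hrsq; norm_num at hrsq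
  have hne2 : |s| * x / (|c| * Real.sqrt (1 - x ^ 2)) ≠ 1 := by
    intro h; rw [h] at hrsq; norm_num at hrsq
  have h := (Real.hasDerivAt_arcsin hne1 hne2).comp x hr
  refine h.congr_deriv (Eq.symm ?_)
  set u := Real.sqrt (1 - x ^ 2) with hu_def
  set t := Real.sqrt (c ^ 2 - x ^ 2) with ht_def
  have hsum : u ^ 2 + x ^ 2 = 1 := by rw [hu2]; ring
  have hnumval : |s| * (|c| * u) - |s| * x * (|c| * (-x / u)) = |s| * |c| / u := by
    field_simp
    linear_combination hsum
  have hkey : 1 - (|s| * x / (|c| * u)) ^ 2 = (t / (|c| * u)) ^ 2 := by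
    have e1 : (|c| * u) ^ 2 = c ^ 2 * u ^ 2 := by rw [mul_pow, sq_abs]
    have e2 : (|s| * x) ^ 2 = s ^ 2 * x ^ 2 := by rw [mul_pow, sq_abs]
    rw [div_pow, div_pow, e1, e2, ht2, hu2]
    field_simp
    linear_combination (-(x ^ 2)) * hcs
  rw [hkey, Real.sqrt_sq (by positivity), hnumval]
  rw [one_div, inv_div]
  field_simp
  linear_combination hu2

noncomputable def Wfun (c s c₁ s₁ γ : ℝ) (x : ℝ) : ℝ :=
  |s| / (Real.pi * (1 - x ^ 2) * Real.sqrt (c ^ 2 - x ^ 2)) * (1 - γ * x) *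
    (((c₁ * s - s₁ * c) ^ 2 * x ^ 4 + (2 * s₁ * c * (c₁ * s - s₁ * c) - c₁ ^ 2) * x ^ 2 + c ^ 2)
      / (c ^ 2 * (1 - x ^ 2)))

noncomputable def Hfun (c s d m γ : ℝ) (x : ℝ) : ℝ :=
  (Real.pi * c ^ 2)⁻¹ *
    (|s| * d ^ 2 * Real.arcsin (x / |c|)
      - m * Real.arcsin (|s| * x / (|c| * Real.sqrt (1 - x ^ 2)))
      + |s| * γ * d ^ 2 * Real.sqrt (c ^ 2 - x ^ 2)
      - γ * m * Real.arctan (Real.sqrt (c ^ 2 - x ^ 2) / |s|))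


lemma derivH (c s c₁ s₁ γ : ℝ) (hc0 : c ≠ 0) (hs0 : s ≠ 0) (hcs : c ^ 2 + s ^ 2 = 1)
    (h1 : c₁ ^ 2 + s₁ ^ 2 = 1) (x : ℝ) (hx : |x| < |c|) :
    HasDerivAt (Hfun c s (c₁ * s - s₁ * c) ((c₁ * s - s₁ * c) ^ 2 - c ^ 2) γ)
      (Wfun c s c₁ s₁ γ x) x := by
  have hx2 : x ^ 2 < c ^ 2 := by nlinarith [sq_abs x, sq_abs c, abs_nonneg x]
  have hc1 : c ^ 2 < 1 := by nlinarith [sq_abs s, abs_pos.2 hs0]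
  have h1x : (0:ℝ) < 1 - x ^ 2 := by linarith
  have hct : (0:ℝ) < c ^ 2 - x ^ 2 := by linarith
  have htpos : 0 < Real.sqrt (c ^ 2 - x ^ 2) := Real.sqrt_pos.2 hct
  set d : ℝ := c₁ * s - s₁ * c with hd
  set m : ℝ := d ^ 2 - c ^ 2 with hm
  have h₁ := (deriv_arcsin_div c hc0 x hx).const_mul (|s| * d ^ 2)
  have h₂ := (deriv_arcsin_comp c s hc0 hs0 hcs x hx).const_mul m
  have h₃ := (deriv_sqrt_sub c x hx2).const_mul (|s| * γ * d ^ 2)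
  have h₄ := (deriv_arctan_sqrt c s hs0 hcs x hx2).const_mul (γ * m)
  have h := (((h₁.sub h₂).add h₃).sub h₄).const_mul (Real.pi * c ^ 2)⁻¹
  have heq : Hfun c s d m γ = fun y => (Real.pi * c ^ 2)⁻¹ *
      (|s| * d ^ 2 * Real.arcsin (y / |c|)
        - m * Real.arcsin (|s| * y / (|c| * Real.sqrt (1 - y ^ 2)))
        + |s| * γ * d ^ 2 * Real.sqrt (c ^ 2 - y ^ 2)
        - γ * m * Real.arctan (Real.sqrt (c ^ 2 - y ^ 2) / |s|)) := by
    funext y; simp [Hfun, mul_comm]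
  rw [heq]
  refine h.congr_deriv (Eq.symm ?_)
  have hb : 2 * s₁ * c * (c₁ * s - s₁ * c) - c₁ ^ 2 = -(c₁ * s - s₁ * c) ^ 2 - c ^ 2 := by
    linear_combination c₁ ^ 2 * hcs - c ^ 2 * h1
  rw [Wfun, hb, hd, hm]
  have hπ : Real.pi ≠ 0 := Real.pi_ne_zero
  field_simp
  ring

lemma contH (c s d m γ : ℝ) (hc0 : c ≠ 0) (hs0 : s ≠ 0) (hcs : c ^ 2 + s ^ 2 = 1) :
    ContinuousOn (Hfun c s d m γ) (Set.Icc (-|c|) |c|) := by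
  have hc1 : c ^ 2 < 1 := by nlinarith [sq_abs s, abs_pos.2 hs0]
  have hcont1 : Continuous fun y : ℝ => Real.arcsin (y / |c|) :=
    Real.continuous_arcsin.comp (continuous_id.div_const _)
  have hcontsq : Continuous fun y : ℝ => Real.sqrt (c ^ 2 - y ^ 2) :=
    Real.continuous_sqrt.comp (continuous_const.sub (continuous_pow 2))
  have hcont3 : Continuous fun y : ℝ => Real.arctan (Real.sqrt (c ^ 2 - y ^ 2) / |s|) :=
    Real.continuous_arctan.comp (hcontsq.div_const _)
  have hcont2 : ContinuousOn (fun y : ℝ => Real.arcsin (|s| * y / (|c| * Real.sqrt (1 - y ^ 2))))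
      (Set.Icc (-|c|) |c|) := by
    apply Real.continuous_arcsin.comp_continuousOn
    apply ContinuousOn.div
    · exact (continuous_const.mul continuous_id).continuousOn
    · exact (continuous_const.mul
        (Real.continuous_sqrt.comp (continuous_const.sub (continuous_pow 2)))).continuousOn
    · intro y hy
      obtain ⟨hy1, hy2⟩ := hy
      have hy2' : y ^ 2 ≤ c ^ 2 := by nlinarith [sq_abs c, abs_nonneg c]
      have : 0 < Real.sqrt (1 - y ^ 2) := Real.sqrt_pos.2 (by nlinarith)
      positivity
  apply ContinuousOn.mul continuousOn_const
  exact (((continuousOn_const.mul hcont1.continuousOn).sub (continuousOn_const.mul hcont2)).add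
    (continuousOn_const.mul hcontsq.continuousOn)).sub (continuousOn_const.mul hcont3.continuousOn)

lemma Hend (c s d m γ : ℝ) (hc0 : c ≠ 0) (hs0 : s ≠ 0) (hcs : c ^ 2 + s ^ 2 = 1) :
    Hfun c s d m γ |c| - Hfun c s d m γ (-|c|) = (|s| * d ^ 2 - m) / c ^ 2 := by
  have hca : 0 < |c| := abs_pos.2 hc0
  have hsa : 0 < |s| := abs_pos.2 hs0
  have e0 : c ^ 2 - |c| ^ 2 = 0 := by rw [sq_abs, sub_self]
  have e0' : c ^ 2 - (-|c|) ^ 2 = 0 := by rw [neg_sq, sq_abs, sub_self]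
  have e1 : (1 : ℝ) - |c| ^ 2 = s ^ 2 := by rw [sq_abs]; linarith
  have e1' : (1 : ℝ) - (-|c|) ^ 2 = s ^ 2 := by rw [neg_sq, sq_abs]; linarith
  have e2 : Real.sqrt (s ^ 2) = |s| := Real.sqrt_sq_eq_abs s
  have harg : |s| * |c| / (|c| * Real.sqrt (1 - |c| ^ 2)) = 1 := by
    rw [e1, e2]; field_simp
  have harg' : |s| * -|c| / (|c| * Real.sqrt (1 - (-|c|) ^ 2)) = -1 := by
    rw [e1', e2]; field_simp
  simp only [Hfun, e0, e0', harg, harg', Real.sqrt_zero, zero_div, Real.arctan_zero,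
    div_self hca.ne', Real.arcsin_one, Real.arcsin_neg_one, mul_zero, sub_zero]
  rw [show -|c| / |c| = -1 by field_simp, Real.arcsin_neg_one]
  have hπ : Real.pi ≠ 0 := Real.pi_ne_zero
  field_simp
  ring

lemma Wnonneg (c s c₁ s₁ γ : ℝ) (hc0 : c ≠ 0) (hs0 : s ≠ 0) (hcs : c ^ 2 + s ^ 2 = 1)
    (h1 : c₁ ^ 2 + s₁ ^ 2 = 1) (hγ : (γ * c) ^ 2 ≤ 1) (x : ℝ) (hx : |x| < |c|) :
    0 ≤ Wfun c s c₁ s₁ γ x := by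
  have hx2 : x ^ 2 < c ^ 2 := by nlinarith [sq_abs x, sq_abs c, abs_nonneg x]
  have hc1 : c ^ 2 < 1 := by nlinarith [sq_abs s, abs_pos.2 hs0]
  have h1x : (0:ℝ) < 1 - x ^ 2 := by linarith
  have hct : (0:ℝ) < c ^ 2 - x ^ 2 := by linarith
  have hc2 : (0:ℝ) < c ^ 2 := by positivity
  have f1 : 0 ≤ |s| / (Real.pi * (1 - x ^ 2) * Real.sqrt (c ^ 2 - x ^ 2)) := by
    have := Real.pi_pos
    have : 0 < Real.sqrt (c ^ 2 - x ^ 2) := Real.sqrt_pos.2 hct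
    positivity
  have f2 : 0 ≤ 1 - γ * x := by
    have hgx : (γ * x) ^ 2 ≤ (γ * c) ^ 2 := by nlinarith [sq_nonneg γ]
    nlinarith [sq_nonneg (γ * x - 1)]
  set d : ℝ := c₁ * s - s₁ * c with hd
  have hmul : (c₁ ^ 2 + s₁ ^ 2) * (c ^ 2 + s ^ 2) = 1 := by rw [h1, hcs]; ring
  have hd1 : d ^ 2 ≤ 1 := by
    simp only [hd]
    nlinarith [sq_nonneg (c₁ * c + s₁ * s), hmul]
  have hcd : c ^ 2 * d ^ 2 ≤ 1 := by nlinarith [sq_nonneg d]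
  have hsos : c ^ 2 * (d ^ 2 * x ^ 4 + (2 * s₁ * c * d - c₁ ^ 2) * x ^ 2 + c ^ 2)
      = (c ^ 2 - x ^ 2) ^ 2 + (c * d + s₁) ^ 2 * x ^ 4
        + ((c * d + s₁) ^ 2 + 1 - c ^ 2 * d ^ 2) * (x ^ 2 * (c ^ 2 - x ^ 2)) := by
    linear_combination (-(c ^ 2 * x ^ 2)) * h1
  have hterm : 0 ≤ ((c * d + s₁) ^ 2 + 1 - c ^ 2 * d ^ 2) * (x ^ 2 * (c ^ 2 - x ^ 2)) := by
    apply mul_nonneg (by nlinarith [sq_nonneg (c * d + s₁)])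
    exact mul_nonneg (sq_nonneg x) hct.le
  have hP : 0 ≤ d ^ 2 * x ^ 4 + (2 * s₁ * c * d - c₁ ^ 2) * x ^ 2 + c ^ 2 := by
    nlinarith [sq_nonneg (c ^ 2 - x ^ 2), mul_nonneg (sq_nonneg (c * d + s₁)) (sq_nonneg (x ^ 2))]
  have f3 : 0 ≤ (d ^ 2 * x ^ 4 + (2 * s₁ * c * d - c₁ ^ 2) * x ^ 2 + c ^ 2)
      / (c ^ 2 * (1 - x ^ 2)) := div_nonneg hP (by positivity)
  exact mul_nonneg (mul_nonneg f1 f2) f3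


lemma key (c s c₁ s₁ : ℝ) (hc0 : c ≠ 0) (hs0 : s ≠ 0) (hcs : c ^ 2 + s ^ 2 = 1)
    (h1 : c₁ ^ 2 + s₁ ^ 2 = 1) (α β : ℂ) (hαβ : Complex.normSq α + Complex.normSq β = 1) :
    (∀ x : ℝ, |x| < |c| → 0 ≤ wdens c s c₁ s₁ α β x)
    ∧ (c₁ * s - s₁ * c) ^ 2 / (1 + |s|) + (∫ x : ℝ, wdens c s c₁ s₁ α β x) = 1 := by
  set γ : ℝ := Complex.normSq α - Complex.normSq β
      + (α * (starRingEnd ℂ) β + (starRingEnd ℂ) α * β).re * s / c with hγdef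
  have hwd : wdens c s c₁ s₁ α β = fun x => if |x| < |c| then Wfun c s c₁ s₁ γ x else 0 := rfl
  -- the bound on γ
  have hγc : (γ * c) ^ 2 ≤ 1 := by
    set u0 : ℝ := Complex.normSq α - Complex.normSq β with hu0
    set v0 : ℝ := (α * (starRingEnd ℂ) β + (starRingEnd ℂ) α * β).re with hv0
    have hvre : v0 = 2 * (α * (starRingEnd ℂ) β).re := by
      rw [hv0]
      have hconj : (starRingEnd ℂ) α * β = (starRingEnd ℂ) (α * (starRingEnd ℂ) β) := by
        rw [map_mul, RingHomCompTriple.comp_apply]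
        simp
      rw [hconj, Complex.add_re, Complex.conj_re]
      ring
    have hnsq : (α * (starRingEnd ℂ) β).re ^ 2 + (α * (starRingEnd ℂ) β).im ^ 2
        = Complex.normSq α * Complex.normSq β := by
      rw [← Complex.normSq_conj β, ← map_mul]
      rw [Complex.normSq_apply]
      ring
    have huv : u0 ^ 2 + v0 ^ 2 ≤ 1 := by
      rw [hvre, hu0]
      nlinarith [sq_nonneg (α * (starRingEnd ℂ) β).im, hnsq, hαβ]
    have hgc : γ * c = u0 * c + v0 * s := by
      rw [hγdef]; field_simp
    rw [hgc]
    nlinarith [sq_nonneg (u0 * s - v0 * c), huv, hcs, sq_nonneg (u0 * c + v0 * s)]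
  have hnonneg : ∀ x : ℝ, |x| < |c| → 0 ≤ wdens c s c₁ s₁ α β x := by
    intro x hx
    rw [hwd]
    simp only [if_pos hx]
    exact Wnonneg c s c₁ s₁ γ hc0 hs0 hcs h1 hγc x hx
  refine ⟨hnonneg, ?_⟩
  set d : ℝ := c₁ * s - s₁ * c with hd
  set m : ℝ := d ^ 2 - c ^ 2 with hm
  have hle : -|c| ≤ |c| := by linarith [abs_nonneg c]
  have hind : (fun x => if |x| < |c| then Wfun c s c₁ s₁ γ x else 0)
      = Set.indicator (Set.Ioo (-|c|) |c|) (Wfun c s c₁ s₁ γ) := by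
    funext x
    rw [Set.indicator_apply]
    by_cases h : |x| < |c|
    · rw [if_pos h, if_pos (Set.mem_Ioo.2 (abs_lt.1 h))]
    · rw [if_neg h, if_neg fun hmem => h (abs_lt.2 (Set.mem_Ioo.1 hmem))]
  have hderiv : ∀ x ∈ Set.Ioo (-|c|) |c|,
      HasDerivAt (Hfun c s d m γ) (Wfun c s c₁ s₁ γ x) x := fun x hx =>
    derivH c s c₁ s₁ γ hc0 hs0 hcs h1 x (abs_lt.2 ⟨hx.1, hx.2⟩)
  have hW0 : ∀ x ∈ Set.Ioo (-|c|) |c|, 0 ≤ Wfun c s c₁ s₁ γ x := fun x hx =>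
    Wnonneg c s c₁ s₁ γ hc0 hs0 hcs h1 hγc x (abs_lt.2 ⟨hx.1, hx.2⟩)
  have hcont := contH c s d m γ hc0 hs0 hcs
  have hint0 : MeasureTheory.IntegrableOn (Wfun c s c₁ s₁ γ) (Set.Ioc (-|c|) |c|) :=
    intervalIntegral.integrableOn_deriv_of_nonneg hcont hderiv hW0
  have hii : IntervalIntegrable (Wfun c s c₁ s₁ γ) MeasureTheory.volume (-|c|) |c| :=
    (intervalIntegrable_iff_integrableOn_Ioc_of_le hle).2 hint0
  have hftc : ∫ y in (-|c|)..|c|, Wfun c s c₁ s₁ γ y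
      = Hfun c s d m γ |c| - Hfun c s d m γ (-|c|) :=
    intervalIntegral.integral_eq_sub_of_hasDerivAt_of_le hle hcont hderiv hii
  have hIoo : (∫ x : ℝ, wdens c s c₁ s₁ α β x) = (|s| * d ^ 2 - m) / c ^ 2 := by
    rw [hwd, hind, MeasureTheory.integral_indicator measurableSet_Ioo,
      ← MeasureTheory.integral_Ioc_eq_integral_Ioo, ← intervalIntegral.integral_of_le hle, hftc,
      Hend c s d m γ hc0 hs0 hcs]
  rw [hIoo, hm]
  have h1s : (0:ℝ) < 1 + |s| := by positivity
  have hc2 : (0:ℝ) < c ^ 2 := by positivity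
  field_simp
  linear_combination (d ^ 2) * hcs + (d ^ 2) * (sq_abs s)

end Aux

theorem stmt18
    (θ θ₁ : ℝ)
    (hθmem : θ ∈ Set.Ico (0 : ℝ) (2 * Real.pi))
    (hθ₁mem : θ₁ ∈ Set.Ico (0 : ℝ) (2 * Real.pi))
    (hθ0 : θ ≠ 0) (hθhalf : θ ≠ Real.pi / 2) (hθpi : θ ≠ Real.pi)
    (hθ3half : θ ≠ 3 * Real.pi / 2)
    (c s c₁ s₁ : ℝ)
    (hc : c = Real.cos θ) (hs : s = Real.sin θ)
    (hc₁ : c₁ = Real.cos θ₁) (hs₁ : s₁ = Real.sin θ₁)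
    (α β : ℂ) (hαβ : Complex.normSq α + Complex.normSq β = 1) :
    (∀ x : ℝ, |x| < |c| → 0 ≤ wdens c s c₁ s₁ α β x)
    ∧ (c₁ * s - s₁ * c) ^ 2 / (1 + |s|) + (∫ x : ℝ, wdens c s c₁ s₁ α β x) = 1 := by
  obtain ⟨h0, h2pi⟩ := hθmem
  have hs0 : s ≠ 0 := by rw [hs]; exact sin_ne θ h0 h2pi hθ0 hθpi
  have hc0 : c ≠ 0 := by rw [hc]; exact cos_ne θ h0 h2pi hθhalf hθ3half
  have hcs : c ^ 2 + s ^ 2 = 1 := by rw [hc, hs]; exact Real.cos_sq_add_sin_sq θ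
  have h1 : c₁ ^ 2 + s₁ ^ 2 = 1 := by rw [hc₁, hs₁]; exact Real.cos_sq_add_sin_sq θ₁
  exact key c s c₁ s₁ hc0 hs0 hcs h1 α β hαβ
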